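/- Let 0<α<1 and let A(z) be a complex polynomial of degree m≥0. Let v(z)=Σ_{n=0}^∞ c_n z^n be an entire function satisfying the Gelfond–Leontiev equation (𝔇_α v)(z)=A(z)v(z) for all z∈ℂ, i.e. Σ_{n=1}^∞ c_n β(n) z^{n−1} = A(z)·Σ_{n=0}^∞ c_n z^n where β(n)=Γ(nα+1)/Γ(nα+1−α). Then there exist constants C>0 and μ≥0 such that |v(z)| ≤ C·exp(μ|z|^{(1+m)/α}) for all z∈ℂ; in particular, the order of the entire function v does not exceed (1+m)/α. -/

import Mathlib

open scoped Real
open scoped Nat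

/-- The coefficient sequence `β(n) = Γ(nα+1)/Γ(nα+1-α)` of the Gelfond–Leontiev
generalized differentiation operator of order `α`. -/
noncomputable def glBeta (α : ℝ) (n : ℕ) : ℝ :=
  Real.Gamma (n * α + 1) / Real.Gamma (n * α + 1 - α)

/-- A power series (in one complex variable) summing to `0` everywhere has all
coefficients equal to `0`. -/
lemma glCoeffUniqueZero (e : ℕ → ℂ)
    (h : ∀ z : ℂ, HasSum (fun n : ℕ => e n * z ^ n) 0) : ∀ n, e n = 0 := by
  have hsum : Summable fun n => ‖e n‖ := by
    refine summable_norm_iff.mpr ?_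
    simpa using (h 1).summable
  set p : FormalMultilinearSeries ℂ ℂ ℂ := FormalMultilinearSeries.ofScalars ℂ e with hp
  have hball : HasFPowerSeriesOnBall (0 : ℂ → ℂ) p 0 1 := by
    refine ⟨?_, one_pos, ?_⟩
    · have : ((1 : NNReal) : ENNReal) ≤ p.radius := by
        apply p.le_radius_of_summable_norm
        have : (fun n => ‖p n‖ * ((1:NNReal):ℝ) ^ n) = fun n => ‖e n‖ := by
          funext n
          simp only [one_pow, mul_one, hp, NNReal.coe_one, FormalMultilinearSeries.ofScalars_norm]
        rw [this]
        exact hsum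
      simpa using this
    · intro y _
      have := h y
      simp only [hp, FormalMultilinearSeries.ofScalars_apply_eq, smul_eq_mul]
      simpa using this
  have hz : p = 0 := HasFPowerSeriesAt.eq_zero ⟨1, hball⟩
  have := (FormalMultilinearSeries.ofScalars_series_eq_zero ℂ (c := e)).mp hz
  intro n
  exact congrFun this n

/-- Gautschi-type inequality, from log-convexity of the Gamma function. -/
lemma glGautschi {x s : ℝ} (hx : 0 < x) (hs : 0 < s) (hs1 : s < 1) :
    Real.Gamma (x + 1 - s) * x ^ s ≤ Real.Gamma (x + 1) := by
  have h1 : (0:ℝ) < x + 1 := by linarith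
  have hxs : (0:ℝ) < x + 1 - s := by linarith
  have hΓx := Real.Gamma_pos_of_pos hx
  have hΓx1 := Real.Gamma_pos_of_pos h1
  have hΓxs := Real.Gamma_pos_of_pos hxs
  have hconv := Real.convexOn_log_Gamma.2 (Set.mem_Ioi.mpr hx) (Set.mem_Ioi.mpr h1)
    hs.le (by linarith : (0:ℝ) ≤ 1 - s) (by ring)
  have hpt : s • x + (1 - s) • (x + 1) = x + 1 - s := by
    simp only [smul_eq_mul]; ring
  rw [hpt] at hconv
  simp only [Function.comp_apply, smul_eq_mul] at hconv
  have key : Real.Gamma (x + 1 - s) ≤ Real.Gamma x ^ s * Real.Gamma (x + 1) ^ (1 - s) := by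
    have := Real.exp_le_exp.mpr hconv
    rw [Real.exp_log hΓxs, Real.exp_add] at this
    rw [Real.rpow_def_of_pos hΓx, Real.rpow_def_of_pos hΓx1]
    rw [mul_comm (Real.log (Real.Gamma x)) s, mul_comm (Real.log (Real.Gamma (x+1))) (1-s)]
    exact this
  have hgx : Real.Gamma x = Real.Gamma (x + 1) / x := by
    rw [Real.Gamma_add_one hx.ne']
    field_simp
  have key2 : Real.Gamma x ^ s * Real.Gamma (x + 1) ^ (1 - s) = Real.Gamma (x+1) / x ^ s := by
    rw [hgx, Real.div_rpow hΓx1.le hx.le, div_mul_eq_mul_div,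
      ← Real.rpow_add hΓx1]
    norm_num
  rw [key2] at key
  rw [← le_div_iff₀ (Real.rpow_pos_of_pos hx s)]
  exact key

lemma glPowDivFactorialLeExp {x : ℝ} (hx : 0 ≤ x) (n : ℕ) :
    x ^ n / (n ! : ℝ) ≤ Real.exp x := by
  calc x ^ n / (n ! : ℝ) ≤ ∑ i ∈ Finset.range (n+1), x ^ i / i ! :=
        Finset.single_le_sum (f := fun i => x ^ i / (i ! : ℝ)) (fun i _ => by positivity)
          (Finset.self_mem_range_succ n)
    _ ≤ Real.exp x := Real.sum_le_exp_of_nonneg hx _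

/-- Lower bound for `glBeta α (n+1)`. -/
lemma glBeta_lower {α : ℝ} (hα : 0 < α) (hα1 : α < 1) (n : ℕ) :
    ((n:ℝ)+1) ^ α * α ^ α ≤ glBeta α (n+1) ∧ 0 < glBeta α (n+1) := by
  have hx : (0:ℝ) < ((n:ℝ)+1) * α := by positivity
  have hβ : glBeta α (n+1) =
      Real.Gamma (((n:ℝ)+1) * α + 1) / Real.Gamma (((n:ℝ)+1) * α + 1 - α) := by
    unfold glBeta
    push_cast
    ring_nf
  have hxs : (0:ℝ) < ((n:ℝ)+1) * α + 1 - α := by nlinarith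
  have hΓ1 := Real.Gamma_pos_of_pos (show (0:ℝ) < ((n:ℝ)+1) * α + 1 by linarith)
  have hΓs := Real.Gamma_pos_of_pos hxs
  have hga := glGautschi hx hα hα1
  constructor
  · rw [hβ, le_div_iff₀ hΓs]
    calc ((n:ℝ)+1) ^ α * α ^ α * Real.Gamma (((n:ℝ)+1) * α + 1 - α)
        = Real.Gamma (((n:ℝ)+1) * α + 1 - α) * (((n:ℝ)+1) * α) ^ α := by
          rw [Real.mul_rpow (by positivity) hα.le]; ring
      _ ≤ Real.Gamma (((n:ℝ)+1) * α + 1) := hga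
  · rw [hβ]
    positivity

/-- **α-entire solutions.** Let `0 < α < 1`, let `A` be a complex polynomial of degree `m`,
and let `v(z) = Σ cₙ zⁿ` be an entire function satisfying the Gelfond–Leontiev equation
`(𝔇_α v)(z) = A(z) v(z)`, i.e. `Σ_{n≥1} cₙ β(n) z^{n-1} = A(z) · Σ cₙ zⁿ`.  Then there are
constants `C > 0`, `μ ≥ 0` such that `|v(z)| ≤ C exp(μ |z|^{(1+m)/α})` for all `z`;
in particular the order of `v` is at most `(1+m)/α`. -/
theorem alpha_entire_solution_order_bound
    (α : ℝ) (hα : 0 < α) (hα1 : α < 1)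
    (A : Polynomial ℂ) (m : ℕ) (hm : A.natDegree = m)
    (c : ℕ → ℂ) (v : ℂ → ℂ)
    (hv : ∀ z : ℂ, HasSum (fun n : ℕ => c n * z ^ n) (v z))
    (heq : ∀ z : ℂ,
      HasSum (fun n : ℕ => c (n + 1) * (glBeta α (n + 1) : ℂ) * z ^ n) (A.eval z * v z)) :
    ∃ C > (0 : ℝ), ∃ μ ≥ (0 : ℝ), ∀ z : ℂ,
      ‖v z‖ ≤ C * Real.exp (μ * ‖z‖ ^ ((1 + (m : ℝ)) / α)) := by
  -- the exponent
  set θ : ℝ := α / ((m:ℝ) + 1) with hθdef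
  have hm1 : (0:ℝ) < (m:ℝ) + 1 := by positivity
  have hθ : 0 < θ := by positivity
  -- the recurrence for the coefficients
  have hcoeff0 : ∀ k, m < k → A.coeff k = 0 := fun k hk =>
    A.coeff_eq_zero_of_natDegree_lt (hm ▸ hk)
  have hprod : ∀ z : ℂ, HasSum
      (fun n => (∑ k ∈ Finset.range (n+1), A.coeff k * c (n-k)) * z ^ n)
      (A.eval z * v z) := by
    intro z
    have hsf : Summable fun k => ‖A.coeff k * z ^ k‖ := by
      apply summable_of_ne_finset_zero (s := Finset.range (m+1))
      intro k hk
      rw [hcoeff0 k (by simpa using hk)]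
      simp
    have hsg : Summable fun n => ‖c n * z ^ n‖ := summable_norm_iff.mpr (hv z).summable
    have H := hasSum_sum_range_mul_of_summable_norm hsf hsg
    have h1 : (∑' k, A.coeff k * z ^ k) = A.eval z := by
      rw [tsum_eq_sum (s := Finset.range (m+1))
        (fun k hk => by rw [hcoeff0 k (by simpa using hk)]; simp)]
      rw [Polynomial.eval_eq_sum_range, hm]
    have h2 : (∑' n, c n * z ^ n) = v z := (hv z).tsum_eq
    rw [h1, h2] at H
    convert H using 2 with n
    · rfl
    rw [Finset.sum_mul]
    apply Finset.sum_congr rfl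
    intro k hk
    have hkn : k ≤ n := by simpa [Nat.lt_succ_iff] using hk
    have : z ^ n = z ^ k * z ^ (n - k) := by
      rw [← pow_add, Nat.add_sub_cancel' hkn]
    rw [this]; ring
  have hrec : ∀ n, c (n+1) * (glBeta α (n+1) : ℂ)
      = ∑ k ∈ Finset.range (n+1), A.coeff k * c (n-k) := by
    have hzero := glCoeffUniqueZero
      (fun n => c (n+1) * (glBeta α (n+1) : ℂ) - ∑ k ∈ Finset.range (n+1), A.coeff k * c (n-k))
      (fun z => by simpa [sub_mul] using (heq z).sub (hprod z))
    intro n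
    exact sub_eq_zero.mp (hzero n)
  -- the constants
  set S : ℝ := ∑ k ∈ Finset.range (m+1), ‖A.coeff k‖ with hSdef
  have hS0 : 0 ≤ S := Finset.sum_nonneg fun _ _ => norm_nonneg _
  have hαα : (0:ℝ) < α ^ α := Real.rpow_pos_of_pos hα α
  set K : ℝ := max 1 (S / α ^ α) with hKdef
  have hK1 : (1:ℝ) ≤ K := le_max_left _ _
  have hK0 : (0:ℝ) < K := lt_of_lt_of_le one_pos hK1
  have hKS : S ≤ K * α ^ α := by
    rw [← div_le_iff₀ hαα]
    exact le_max_right _ _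
  set D : ℝ := max ‖c 0‖ 1 with hDdef
  have hD1 : (1:ℝ) ≤ D := le_max_right _ _
  have hD0 : (0:ℝ) < D := lt_of_lt_of_le one_pos hD1
  -- partial sums of norms of coefficients of A are at most S
  have hSn : ∀ n : ℕ, ∑ k ∈ Finset.range (n+1), ‖A.coeff k‖ ≤ S := by
    intro n
    rcases le_total n m with h | h
    · exact Finset.sum_le_sum_of_subset_of_nonneg
        (Finset.range_subset_range.mpr (by omega)) (fun _ _ _ => norm_nonneg _)
    · apply le_of_eq
      rw [hSdef]
      exact (Finset.sum_subset (Finset.range_subset_range.mpr (by omega))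
        (fun k _ hk => by rw [hcoeff0 k (by simpa using hk)]; simp)).symm
  -- the key coefficient estimate, by strong induction
  have hcoef : ∀ n : ℕ, ‖c n‖ * ((n ! : ℝ)) ^ θ ≤ D * K ^ n := by
    intro n
    induction n using Nat.strong_induction_on with
    | _ n ih =>
      cases n with
      | zero =>
        simp only [Nat.factorial_zero, Nat.cast_one, Real.one_rpow, pow_zero, mul_one]
        exact le_max_left _ _
      | succ n =>
        -- per-index estimate
        have hβ := glBeta_lower hα hα1 n
        have hnorm : ‖c (n+1) * (glBeta α (n+1) : ℂ)‖ = ‖c (n+1)‖ * glBeta α (n+1) := by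
          rw [norm_mul, Complex.norm_real, Real.norm_eq_abs, abs_of_pos hβ.2]
        have hck : ∀ k, k ≤ n → k ≤ m →
            ‖c (n-k)‖ * ((n ! : ℝ)) ^ θ ≤ D * K ^ n * ((n:ℝ)+1) ^ ((m:ℝ) * θ) := by
          intro k hkn hkm
          have hfct : ((n ! : ℝ)) ^ θ ≤ (((n-k)! : ℝ)) ^ θ * ((n:ℝ)+1) ^ ((m:ℝ) * θ) := by
            have hnat : (n ! : ℝ) ≤ ((n-k)! : ℝ) * ((n:ℝ)+1) ^ k := by
              have h1 : n ! ≤ (n-k)! * (n+1) ^ k := by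
                rw [← Nat.factorial_mul_descFactorial hkn]
                exact Nat.mul_le_mul_left _ ((n.descFactorial_le_pow k).trans
                  (Nat.pow_le_pow_left (Nat.le_succ n) k))
              exact_mod_cast h1
            calc ((n ! : ℝ)) ^ θ
                ≤ (((n-k)! : ℝ) * ((n:ℝ)+1) ^ k) ^ θ :=
                  Real.rpow_le_rpow (by positivity) hnat hθ.le
              _ = (((n-k)! : ℝ)) ^ θ * (((n:ℝ)+1) ^ k) ^ θ :=
                  Real.mul_rpow (by positivity) (by positivity)
              _ = (((n-k)! : ℝ)) ^ θ * ((n:ℝ)+1) ^ ((k:ℝ) * θ) := by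
                  rw [← Real.rpow_natCast ((n:ℝ)+1) k, ← Real.rpow_mul (by positivity)]
              _ ≤ (((n-k)! : ℝ)) ^ θ * ((n:ℝ)+1) ^ ((m:ℝ) * θ) := by
                  apply mul_le_mul_of_nonneg_left _ (by positivity)
                  exact Real.rpow_le_rpow_of_exponent_le (by simp)
                    (mul_le_mul_of_nonneg_right (by exact_mod_cast hkm) hθ.le)
          calc ‖c (n-k)‖ * ((n ! : ℝ)) ^ θ
              ≤ ‖c (n-k)‖ * ((((n-k)! : ℝ)) ^ θ * ((n:ℝ)+1) ^ ((m:ℝ) * θ)) :=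
                mul_le_mul_of_nonneg_left hfct (norm_nonneg _)
            _ = (‖c (n-k)‖ * (((n-k)! : ℝ)) ^ θ) * ((n:ℝ)+1) ^ ((m:ℝ) * θ) := by ring
            _ ≤ (D * K ^ (n-k)) * ((n:ℝ)+1) ^ ((m:ℝ) * θ) := by
                apply mul_le_mul_of_nonneg_right _ (by positivity)
                exact ih (n-k) (by omega)
            _ ≤ D * K ^ n * ((n:ℝ)+1) ^ ((m:ℝ) * θ) := by
                apply mul_le_mul_of_nonneg_right _ (by positivity)
                exact mul_le_mul_of_nonneg_left
                  (pow_le_pow_right₀ hK1 (Nat.sub_le n k)) hD0.le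
        -- summing the recurrence
        have hsum_est : ‖c (n+1)‖ * glBeta α (n+1) * ((n ! : ℝ)) ^ θ
            ≤ S * (D * K ^ n * ((n:ℝ)+1) ^ ((m:ℝ) * θ)) := by
          have h1 : ‖c (n+1)‖ * glBeta α (n+1)
              ≤ ∑ k ∈ Finset.range (n+1), ‖A.coeff k‖ * ‖c (n-k)‖ := by
            rw [← hnorm, hrec n]
            exact (norm_sum_le _ _).trans (le_of_eq (Finset.sum_congr rfl
              fun k _ => norm_mul _ _))
          calc ‖c (n+1)‖ * glBeta α (n+1) * ((n ! : ℝ)) ^ θ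
              ≤ (∑ k ∈ Finset.range (n+1), ‖A.coeff k‖ * ‖c (n-k)‖) * ((n ! : ℝ)) ^ θ :=
                mul_le_mul_of_nonneg_right h1 (by positivity)
            _ = ∑ k ∈ Finset.range (n+1), ‖A.coeff k‖ * (‖c (n-k)‖ * ((n ! : ℝ)) ^ θ) := by
                rw [Finset.sum_mul]; apply Finset.sum_congr rfl; intros; ring
            _ ≤ ∑ k ∈ Finset.range (n+1),
                  ‖A.coeff k‖ * (D * K ^ n * ((n:ℝ)+1) ^ ((m:ℝ) * θ)) := by
                apply Finset.sum_le_sum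
                intro k hk
                have hkn : k ≤ n := by simpa [Nat.lt_succ_iff] using hk
                rcases le_or_gt k m with hkm | hkm
                · exact mul_le_mul_of_nonneg_left (hck k hkn hkm) (norm_nonneg _)
                · rw [hcoeff0 k hkm]; simp
            _ = (∑ k ∈ Finset.range (n+1), ‖A.coeff k‖)
                  * (D * K ^ n * ((n:ℝ)+1) ^ ((m:ℝ) * θ)) := by rw [← Finset.sum_mul]
            _ ≤ S * (D * K ^ n * ((n:ℝ)+1) ^ ((m:ℝ) * θ)) :=
                mul_le_mul_of_nonneg_right (hSn n) (by positivity)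
        -- conclude
        have hfac : (((n+1)! : ℝ)) ^ θ = ((n ! : ℝ)) ^ θ * ((n:ℝ)+1) ^ θ := by
          rw [Nat.factorial_succ]
          push_cast
          rw [Real.mul_rpow (by positivity) (by positivity)]
          ring
        have hq : (0:ℝ) < ((n:ℝ)+1) ^ α * α ^ α := by positivity
        apply le_of_mul_le_mul_right _ hq
        have hexp : ((m:ℝ) * θ + θ) = α := by
          rw [hθdef]; field_simp
        calc ‖c (n+1)‖ * (((n+1)! : ℝ)) ^ θ * (((n:ℝ)+1) ^ α * α ^ α)
            ≤ ‖c (n+1)‖ * (((n+1)! : ℝ)) ^ θ * glBeta α (n+1) :=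
              mul_le_mul_of_nonneg_left hβ.1 (by positivity)
          _ = (‖c (n+1)‖ * glBeta α (n+1) * ((n ! : ℝ)) ^ θ) * ((n:ℝ)+1) ^ θ := by
              rw [hfac]; ring
          _ ≤ (S * (D * K ^ n * ((n:ℝ)+1) ^ ((m:ℝ) * θ))) * ((n:ℝ)+1) ^ θ :=
              mul_le_mul_of_nonneg_right hsum_est (by positivity)
          _ = S * D * K ^ n * (((n:ℝ)+1) ^ ((m:ℝ) * θ) * ((n:ℝ)+1) ^ θ) := by ring
          _ = S * D * K ^ n * ((n:ℝ)+1) ^ α := by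
              rw [← Real.rpow_add (by positivity), hexp]
          _ ≤ (K * α ^ α) * D * K ^ n * ((n:ℝ)+1) ^ α := by
              apply mul_le_mul_of_nonneg_right _ (by positivity)
              apply mul_le_mul_of_nonneg_right _ (by positivity)
              exact mul_le_mul_of_nonneg_right hKS hD0.le
          _ = D * K ^ (n+1) * (((n:ℝ)+1) ^ α * α ^ α) := by ring
  -- final summation
  refine ⟨2 * D, by positivity, θ * (2*K) ^ (1/θ), by positivity, ?_⟩
  intro z
  set r : ℝ := ‖z‖ with hr
  have hr0 : (0:ℝ) ≤ r := norm_nonneg z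
  set x : ℝ := (2*K*r) ^ (1/θ) with hxdef
  have h2Kr : (0:ℝ) ≤ 2*K*r := by positivity
  have hx0 : (0:ℝ) ≤ x := Real.rpow_nonneg h2Kr _
  -- term bound
  have hterm : ∀ n : ℕ, ‖c n * z ^ n‖ ≤ (D * Real.exp (θ * x)) * (1/2:ℝ) ^ n := by
    intro n
    have hfθ : (0:ℝ) < ((n ! : ℝ)) ^ θ := by positivity
    have hA : (2*K*r) ^ n / ((n ! : ℝ)) ^ θ ≤ Real.exp (θ * x) := by
      have e1 : (x ^ n : ℝ) ^ θ = (2*K*r) ^ n := by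
        rw [← Real.rpow_natCast x n, ← Real.rpow_mul hx0, hxdef,
          ← Real.rpow_mul h2Kr, show 1/θ * ((n:ℝ) * θ) = (n:ℝ) by field_simp,
          Real.rpow_natCast]
      calc (2*K*r) ^ n / ((n ! : ℝ)) ^ θ
          = (x ^ n / (n ! : ℝ)) ^ θ := by
            rw [Real.div_rpow (by positivity) (by positivity), e1]
        _ ≤ Real.exp x ^ θ :=
            Real.rpow_le_rpow (by positivity) (glPowDivFactorialLeExp hx0 n) hθ.le
        _ = Real.exp (x * θ) := (Real.exp_mul x θ).symm
        _ = Real.exp (θ * x) := by rw [mul_comm]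
    have hcn : ‖c n‖ ≤ D * K ^ n / ((n ! : ℝ)) ^ θ := by
      rw [le_div_iff₀ hfθ]
      exact hcoef n
    calc ‖c n * z ^ n‖ = ‖c n‖ * r ^ n := by rw [norm_mul, norm_pow, hr]
      _ ≤ (D * K ^ n / ((n ! : ℝ)) ^ θ) * r ^ n :=
          mul_le_mul_of_nonneg_right hcn (by positivity)
      _ = D * ((2*K*r) ^ n / ((n ! : ℝ)) ^ θ) * (1/2:ℝ) ^ n := by
          rw [mul_pow, mul_pow]
          field_simp
          rw [mul_assoc, ← mul_pow]; norm_num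
      _ ≤ D * Real.exp (θ * x) * (1/2:ℝ) ^ n := by
          apply mul_le_mul_of_nonneg_right _ (by positivity)
          exact mul_le_mul_of_nonneg_left hA hD0.le
  have hgsum : Summable (fun n : ℕ => (D * Real.exp (θ * x)) * (1/2:ℝ) ^ n) :=
    (summable_geometric_of_lt_one (by norm_num) (by norm_num)).mul_left _
  have hsn : Summable (fun n : ℕ => ‖c n * z ^ n‖) :=
    Summable.of_nonneg_of_le (fun n => norm_nonneg _) hterm hgsum
  have hvz : ‖v z‖ ≤ 2 * D * Real.exp (θ * x) := by
    calc ‖v z‖ = ‖∑' n, c n * z ^ n‖ := by rw [(hv z).tsum_eq]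
      _ ≤ ∑' n, ‖c n * z ^ n‖ := norm_tsum_le_tsum_norm hsn
      _ ≤ ∑' n : ℕ, (D * Real.exp (θ * x)) * (1/2:ℝ) ^ n := Summable.tsum_le_tsum hterm hsn hgsum
      _ = (D * Real.exp (θ * x)) * (1 - 1/2:ℝ)⁻¹ := by
          rw [tsum_mul_left, tsum_geometric_of_lt_one (by norm_num) (by norm_num)]
      _ = 2 * D * Real.exp (θ * x) := by norm_num; ring
  -- rewrite the exponent
  have hxsplit : θ * x = θ * (2*K) ^ (1/θ) * r ^ ((1 + (m:ℝ)) / α) := by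
    have h1 : (1:ℝ)/θ = (1 + (m:ℝ)) / α := by
      rw [hθdef]
      field_simp
      ring
    rw [hxdef, Real.mul_rpow (by positivity) hr0, h1]
    ring
  rw [hxsplit] at hvz
  exact hvz
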